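/- Under the assumptions of Fejér monotonicity (Landweber iterates with the weak tangential cone condition with constants M < √2 and μ > 0, all iterates remaining in a ball containing a solution u* of F(u) = φ), the residuals are square-summable with the explicit bound ∑_{k=0}^∞ ‖F(u_k) − φ‖² ≤ (1/μ)‖u_0 − u*‖². -/
import Mathlib


open RealInnerProductSpace

/-- Square-summability of the residuals of the Landweber iteration, with the
explicit bound `∑ ‖F(u_k) − φ‖² ≤ (1/μ)‖u₀ − u*‖²`. -/
theorem landweber_residuals_square_summable
    {X Y : Type*} [NormedAddCommGroup X] [InnerProductSpace ℝ X] [CompleteSpace X]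
    [NormedAddCommGroup Y] [InnerProductSpace ℝ Y] [CompleteSpace Y]
    (F : X → Y) (F' : X → X →L[ℝ] Y) (hF : ∀ u, HasFDerivAt F (F' u) u)
    (B : Set X) (ustar : X) (φ : Y) (hsol : F ustar = φ) (hustar : ustar ∈ B)
    (M μ : ℝ) (hM : 0 < M) (hMs : M < Real.sqrt 2) (hμ : 0 < μ)
    (hbound : ∀ u ∈ B, ‖F' u‖ ≤ M)
    (htcc : ∀ u ∈ B, ∀ v ∈ B,
      2 * ⟪F u - F v, F' u (u - v)⟫ ≥ (M ^ 2 + μ) * ‖F u - F v‖ ^ 2)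
    (u : ℕ → X)
    (hiter : ∀ k, u (k + 1) = u k - ContinuousLinearMap.adjoint (F' (u k)) (F (u k) - φ))
    (hin : ∀ k, u k ∈ B) :
    Summable (fun k => ‖F (u k) - φ‖ ^ 2) ∧
      ∑' k : ℕ, ‖F (u k) - φ‖ ^ 2 ≤ (1 / μ) * ‖u 0 - ustar‖ ^ 2 := by
  -- one-step Fejér monotonicity estimate
  have key : ∀ k, ‖u (k + 1) - ustar‖ ^ 2 ≤ ‖u k - ustar‖ ^ 2 - μ * ‖F (u k) - φ‖ ^ 2 := by
    intro k
    set r := F (u k) - φ with hr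
    set s := ContinuousLinearMap.adjoint (F' (u k)) r with hs
    have hexp : ‖u (k + 1) - ustar‖ ^ 2
        = ‖u k - ustar‖ ^ 2 - 2 * ⟪u k - ustar, s⟫ + ‖s‖ ^ 2 := by
      rw [hiter k]
      have : u k - s - ustar = (u k - ustar) - s := by abel
      rw [this, norm_sub_sq_real]
    have hadj : ⟪u k - ustar, s⟫ = ⟪r, F' (u k) (u k - ustar)⟫ := by
      rw [hs, ContinuousLinearMap.adjoint_inner_right, real_inner_comm]
    have htc : 2 * ⟪r, F' (u k) (u k - ustar)⟫ ≥ (M ^ 2 + μ) * ‖r‖ ^ 2 := by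
      have := htcc (u k) (hin k) ustar hustar
      rwa [hsol] at this
    have hsnorm : ‖s‖ ^ 2 ≤ M ^ 2 * ‖r‖ ^ 2 := by
      have h1 : ‖s‖ ≤ M * ‖r‖ := by
        calc ‖s‖ ≤ ‖ContinuousLinearMap.adjoint (F' (u k))‖ * ‖r‖ :=
              (ContinuousLinearMap.adjoint (F' (u k))).le_opNorm r
          _ ≤ M * ‖r‖ := by
              gcongr
              rw [LinearIsometryEquiv.norm_map ContinuousLinearMap.adjoint (F' (u k))]
              exact hbound (u k) (hin k)
      calc ‖s‖ ^ 2 ≤ (M * ‖r‖) ^ 2 := by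
              apply pow_le_pow_left₀ (norm_nonneg _) h1
        _ = M ^ 2 * ‖r‖ ^ 2 := by ring
    rw [hexp, hadj]
    nlinarith [htc, hsnorm]
  have hnn : ∀ k, (0:ℝ) ≤ ‖F (u k) - φ‖ ^ 2 := fun k => by positivity
  have hsum : ∀ n, ∑ k ∈ Finset.range n, ‖F (u k) - φ‖ ^ 2 ≤ (1 / μ) * ‖u 0 - ustar‖ ^ 2 := by
    intro n
    have h : μ * ∑ k ∈ Finset.range n, ‖F (u k) - φ‖ ^ 2
        ≤ ‖u 0 - ustar‖ ^ 2 - ‖u n - ustar‖ ^ 2 := by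
      induction n with
      | zero => simp
      | succ n ih =>
        rw [Finset.sum_range_succ, mul_add]
        have := key n
        linarith
    have h2 : μ * ∑ k ∈ Finset.range n, ‖F (u k) - φ‖ ^ 2 ≤ ‖u 0 - ustar‖ ^ 2 := by
      have : (0:ℝ) ≤ ‖u n - ustar‖ ^ 2 := by positivity
      linarith
    rw [div_mul_eq_mul_div, le_div_iff₀ hμ, mul_comm]
    linarith
  have hS : Summable (fun k => ‖F (u k) - φ‖ ^ 2) :=
    summable_of_sum_range_le hnn hsum
  exact ⟨hS, Summable.tsum_le_of_sum_range_le hS hsum⟩
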